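/- Let f be a causal homeomorphism of G = ℝ × ℝ³ that is an asymptotic homeomorphism, i.e. both f and f⁻¹ are asymptotically regular. Then the asymptotic transform f⁺ is a homeomorphism of ℝ³ and (f⁻¹)⁺ = (f⁺)⁻¹. -/
import Mathlib


open Filter Topology Set

noncomputable section

/-- Euclidean 3-space. -/
abbrev E3 : Type := EuclideanSpace ℝ (Fin 3)

/-- The Galilean space-time `G = ℝ × ℝ³`. -/
abbrev Gal : Type := ℝ × E3

/-- A transformation (homeomorphism) of `G` is causal if it preserves the time
ordering of events: `P_T(u) < P_T(w)` implies `P_T(f(u)) < P_T(f(w))`. -/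
def Causal (f : Gal ≃ₜ Gal) : Prop :=
  ∀ u w : Gal, u.1 < w.1 → (f u).1 < (f w).1

/-- The semitrajectory in `G` which is the graph of the curve `γ` on `[t₀, ∞)`. -/
def semitraj (t₀ : ℝ) (γ : ℝ → E3) : Set Gal :=
  (fun t => (t, γ t)) '' Set.Ici t₀

/-- `S ⊆ G` is a semitrajectory: the graph of a continuous curve `γ : [t₀, ∞) → ℝ³`. -/
def IsSemitraj (S : Set Gal) : Prop :=
  ∃ (t₀ : ℝ) (γ : ℝ → E3), ContinuousOn γ (Set.Ici t₀) ∧ S = semitraj t₀ γ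

/-- `S` is an asymptotically regular semitrajectory with asymptotic velocity `v`,
i.e. `S` is the graph of a continuous curve `γ : [t₀, ∞) → ℝ³` with `γ(t)/t → v`. -/
def HasAsympVel (S : Set Gal) (v : E3) : Prop :=
  ∃ (t₀ : ℝ) (γ : ℝ → E3), ContinuousOn γ (Set.Ici t₀) ∧ S = semitraj t₀ γ ∧
    Tendsto (fun t : ℝ => t⁻¹ • γ t) atTop (𝓝 v)

/-- `F` is the asymptotic transform of `f`: for every `v`, every asymptotically regular
semitrajectory `S` with `ω(S) = v` has `ω(f(S)) = F v`.  (In particular the existence of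
such an `F` says exactly that `f` is asymptotically regular at every point.) -/
def IsAsympTransform (f : Gal ≃ₜ Gal) (F : E3 → E3) : Prop :=
  ∀ (v : E3) (S : Set Gal), HasAsympVel S v → HasAsympVel (f '' S) (F v)

/-- `f` is asymptotically regular: at every `v ∈ V` there is a `v′` such that every
asymptotically regular semitrajectory with asymptotic velocity `v` is mapped to one with
asymptotic velocity `v′`. -/
def AsympReg (f : Gal ≃ₜ Gal) : Prop :=
  ∃ F : E3 → E3, IsAsympTransform f F

/-- `f` is an asymptotic homeomorphism: both `f` and `f⁻¹` are asymptotically regular. -/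
def AsympHomeo (f : Gal ≃ₜ Gal) : Prop := AsympReg f ∧ AsympReg f.symm

/-- `f` is an asymptotically identical transformation: a causal asymptotic
homeomorphism with `f⁺ = id`. -/
def AsympIdentical (f : Gal ≃ₜ Gal) : Prop :=
  Causal f ∧ AsympHomeo f ∧ IsAsympTransform f (id : E3 → E3)

/-- `f` is an asymptotically Euclidean transformation: a causal asymptotic
homeomorphism with `f⁺(v) = R v − v₀` for some orthogonal `R` and `v₀ ∈ ℝ³`. -/
def AsympEuclidean (f : Gal ≃ₜ Gal) : Prop :=
  Causal f ∧ AsympHomeo f ∧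
    ∃ (R : E3 ≃ₗᵢ[ℝ] E3) (v₀ : E3), IsAsympTransform f (fun v => R v - v₀)

section AuxLemmas


lemma mem_semitraj {t₀ : ℝ} {γ : ℝ → E3} {p : Gal} :
    p ∈ semitraj t₀ γ ↔ t₀ ≤ p.1 ∧ p.2 = γ p.1 := by
  constructor
  · rintro ⟨t, ht, rfl⟩; exact ⟨ht, rfl⟩
  · rintro ⟨h1, h2⟩; exact ⟨p.1, h1, by simp [← h2]⟩

lemma hasAsympVel_unique {S : Set Gal} {v w : E3}
    (hv : HasAsympVel S v) (hw : HasAsympVel S w) : v = w := by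
  obtain ⟨t₀, γ, _, rfl, hγ⟩ := hv
  obtain ⟨t₁, δ, _, hS, hδ⟩ := hw
  refine tendsto_nhds_unique hγ (hδ.congr' ?_)
  filter_upwards [eventually_ge_atTop (max t₀ t₁)] with t ht
  have h1 : ((t, γ t) : Gal) ∈ semitraj t₁ δ := by
    rw [← hS]; exact ⟨t, le_trans (le_max_left _ _) ht, rfl⟩
  have h2 := (mem_semitraj.mp h1).2
  simp only at h2
  rw [h2]

lemma line_tendsto (w : E3) :
    Tendsto (fun t : ℝ => t⁻¹ • (t • w)) atTop (𝓝 w) := by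
  refine tendsto_const_nhds.congr' ?_
  filter_upwards [eventually_ge_atTop (1:ℝ)] with t ht
  rw [smul_smul, inv_mul_cancel₀ (by linarith), one_smul]

lemma line_hasAsympVel (v : E3) : HasAsympVel (semitraj 1 (fun t => t • v)) v :=
  ⟨1, _, (continuous_id.smul continuous_const).continuousOn, rfl, line_tendsto v⟩

lemma causal_time_eq {f : Gal ≃ₜ Gal} (hf : Causal f) {a b : Gal} (hab : a.1 = b.1) :
    (f a).1 = (f b).1 := by
  have key : ∀ a b : Gal, a.1 = b.1 → ¬ (f a).1 < (f b).1 := by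
    intro a b hab hlt
    set m := ((f a).1 + (f b).1) / 2 with hm
    set V : Set Gal := f ⁻¹' ((Set.Ioo (f a).1 (f b).1) ×ˢ (Set.univ : Set E3)) with hV
    have hVopen : IsOpen V :=
      f.continuous.isOpen_preimage _ (isOpen_Ioo.prod isOpen_univ)
    have hsub : ∀ p ∈ V, p.1 = a.1 := by
      intro p hp
      simp only [hV, Set.mem_preimage, Set.mem_prod, Set.mem_Ioo, Set.mem_univ, and_true] at hp
      rcases lt_trichotomy p.1 a.1 with h | h | h
      · exact absurd (hf p a h) (by linarith [hp.1])
      · exact h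
      · have hb : b.1 < p.1 := hab ▸ h
        exact absurd (hf b p hb) (by linarith [hp.2])
    have hqV : f.symm (m, 0) ∈ V := by
      simp only [hV, Set.mem_preimage, Homeomorph.apply_symm_apply, Set.mem_prod,
        Set.mem_Ioo, Set.mem_univ, and_true]
      constructor <;> · simp only [hm]; linarith
    set q : Gal := f.symm (m, 0) with hq
    have hW : IsOpen ((fun r : ℝ => ((r, q.2) : Gal)) ⁻¹' V) :=
      hVopen.preimage (continuous_id.prodMk continuous_const)
    have hqW : q.1 ∈ (fun r : ℝ => ((r, q.2) : Gal)) ⁻¹' V := by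
      simp only [Set.mem_preimage]
      convert hqV
    obtain ⟨η, hη, hball⟩ := Metric.isOpen_iff.mp hW q.1 hqW
    have hmem : q.1 + η / 2 ∈ (fun r : ℝ => ((r, q.2) : Gal)) ⁻¹' V := by
      apply hball
      rw [Metric.mem_ball, Real.dist_eq, show q.1 + η/2 - q.1 = η/2 by ring,
        abs_of_nonneg (by linarith)]
      linarith
    have := hsub _ hmem
    have hq1 : q.1 = a.1 := hsub q hqV
    simp only at this
    linarith
  rcases lt_trichotomy (f a).1 (f b).1 with h | h | h
  · exact absurd h (key a b hab)
  · exact h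
  · exact absurd h (key b a hab.symm)

lemma causal_fst_eq {f : Gal ≃ₜ Gal} (hf : Causal f) (p : Gal) :
    (f p).1 = (f (p.1, 0)).1 :=
  causal_time_eq hf rfl

lemma causal_symm {f : Gal ≃ₜ Gal} (hf : Causal f) : Causal f.symm := by
  intro u w huw
  rcases lt_trichotomy (f.symm u).1 (f.symm w).1 with h | h | h
  · exact h
  · exfalso
    have h2 := causal_time_eq hf (a := f.symm u) (b := f.symm w) h
    rw [Homeomorph.apply_symm_apply, Homeomorph.apply_symm_apply] at h2
    exact absurd h2 (ne_of_lt huw)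
  · exfalso
    have h2 := hf _ _ h
    rw [Homeomorph.apply_symm_apply, Homeomorph.apply_symm_apply] at h2
    linarith

lemma causal_phi_tendsto {f : Gal ≃ₜ Gal} (hf : Causal f) :
    Tendsto (fun t : ℝ => (f (t, 0)).1) atTop atTop := by
  apply tendsto_atTop_atTop_of_monotone
  · intro s t hst
    rcases eq_or_lt_of_le hst with rfl | h
    · exact le_rfl
    · exact (hf _ _ h).le
  · intro b
    refine ⟨(f.symm (b, 0)).1, ?_⟩
    have h := causal_fst_eq hf (f.symm (b, 0))
    rw [Homeomorph.apply_symm_apply] at h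
    exact le_of_eq h

lemma key_tendsto {f : Gal ≃ₜ Gal} {F : E3 → E3}
    (hf : Causal f) (hF : IsAsympTransform f F) {t₀ : ℝ} {γ : ℝ → E3} {v : E3}
    (hγ : ContinuousOn γ (Set.Ici t₀))
    (hv : Tendsto (fun t : ℝ => t⁻¹ • γ t) atTop (𝓝 v)) :
    Tendsto (fun t : ℝ => ((f (t, 0)).1)⁻¹ • (f (t, γ t)).2) atTop (𝓝 (F v)) := by
  obtain ⟨s₀, δ, hδc, him, hδv⟩ := hF v (semitraj t₀ γ) ⟨t₀, γ, hγ, rfl, hv⟩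
  refine (hδv.comp (causal_phi_tendsto hf)).congr' ?_
  filter_upwards [eventually_ge_atTop t₀] with t ht
  have hmem : f (t, γ t) ∈ semitraj s₀ δ := by
    rw [← him]; exact ⟨(t, γ t), ⟨t, ht, rfl⟩, rfl⟩
  obtain ⟨h1, h2⟩ := mem_semitraj.mp hmem
  have hfst : (f (t, γ t)).1 = (f (t, 0)).1 := causal_fst_eq hf _
  simp only [Function.comp]
  rw [← hfst, ← h2]



lemma continuous_of_causal_transform {f : Gal ≃ₜ Gal} {F : E3 → E3}
    (hf : Causal f) (hF : IsAsympTransform f F) : Continuous F := by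
  rw [continuous_iff_seqContinuous]
  intro x v hx
  by_contra hno
  rw [Metric.tendsto_atTop] at hno
  push_neg at hno
  obtain ⟨ε, hε, hfreq⟩ := hno
  obtain ⟨ψ, hψ, hdist⟩ :
      ∃ ψ : ℕ → ℕ, StrictMono ψ ∧ ∀ n, ε ≤ dist ((F ∘ x) (ψ n)) (F v) := by
    apply Filter.extraction_of_frequently_atTop
      (P := fun n => ε ≤ dist ((F ∘ x) n) (F v))
    rw [Filter.frequently_atTop]
    intro N; obtain ⟨n, hn, h⟩ := hfreq N; exact ⟨n, hn, h⟩
  set vs : ℕ → E3 := x ∘ ψ with hvs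
  have hvsl : Tendsto vs atTop (𝓝 v) := hx.comp hψ.tendsto_atTop
  -- times where the line estimate holds
  have hT : ∀ n : ℕ, ∃ T : ℝ, ∀ t ≥ T,
      dist (((f (t,0)).1)⁻¹ • (f (t, t • vs n)).2) (F (vs n)) < ε/2 := by
    intro n
    have h := key_tendsto hf hF (t₀ := 1) (γ := fun t => t • vs n)
      (continuous_id.smul continuous_const).continuousOn (line_tendsto (vs n))
    exact (Metric.tendsto_atTop.mp h) (ε/2) (by linarith)
  choose T hTspec using hT
  -- recursive choice of times
  set tt : ℕ → ℝ := fun n => Nat.rec (max (T 0) 1) (fun n ih => max (T (n+1)) (ih + 1)) n with htt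
  have httT : ∀ n, T n ≤ tt n := by
    intro n; cases n with
    | zero => exact le_max_left _ _
    | succ k => exact le_max_left _ _
  have httlt : ∀ n, tt n + 1 ≤ tt (n+1) := fun n => le_max_right _ _
  have httmono : StrictMono tt :=
    strictMono_nat_of_lt_succ (fun n => by have := httlt n; linarith)
  have htt1 : ∀ n : ℕ, (n : ℝ) + 1 ≤ tt n := by
    intro n; induction n with
    | zero =>
      have h : (1:ℝ) ≤ tt 0 := le_max_right (T 0) 1
      simpa using h
    | succ k ih => have := httlt k; push_cast; linarith
  have httop : Tendsto tt atTop atTop :=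
    tendsto_atTop_mono (fun n => by have := htt1 n; linarith)
      (tendsto_atTop_add_const_right _ 1 tendsto_natCast_atTop_atTop)
  -- ramps
  set ramp : ℕ → ℝ → ℝ := fun n s => min 1 (max 0 ((s - tt n) / (tt (n+1) - tt n))) with hramp
  have hden : ∀ n, 0 < tt (n+1) - tt n := fun n => by have := httlt n; linarith
  have hr0 : ∀ n s, s ≤ tt n → ramp n s = 0 := by
    intro n s hs
    have h : (s - tt n) / (tt (n+1) - tt n) ≤ 0 :=
      div_nonpos_of_nonpos_of_nonneg (by linarith) (hden n).le
    simp only [hramp]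
    rw [max_eq_left h, min_eq_right zero_le_one]
  have hr1 : ∀ n s, tt (n+1) ≤ s → ramp n s = 1 := by
    intro n s hs
    have h1 : (1:ℝ) ≤ (s - tt n) / (tt (n+1) - tt n) :=
      (one_le_div (hden n)).mpr (by linarith)
    simp only [hramp]
    rw [max_eq_right (le_trans zero_le_one h1), min_eq_left h1]
  have hrmem : ∀ n s, 0 ≤ ramp n s ∧ ramp n s ≤ 1 := fun n s =>
    ⟨le_min zero_le_one (le_max_left _ _), min_le_left _ _⟩
  have hrc : ∀ n, Continuous (ramp n) := fun n =>
    continuous_const.min (continuous_const.max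
      ((continuous_id.sub continuous_const).div_const _))
  set Δ : ℕ → E3 := fun n => vs (n+1) - vs n with hΔ
  set u : ℝ → E3 := fun s => vs 0 + ∑' n, ramp n s • Δ n with hu
  -- collapse formula
  have hcol : ∀ m s, tt m ≤ s → s < tt (m+1) → u s = vs m + ramp m s • Δ m := by
    intro m s h1 h2
    have hz : ∀ n ∉ Finset.range (m+1), ramp n s • Δ n = 0 := by
      intro n hn
      rw [Finset.mem_range, not_lt] at hn
      have : s ≤ tt n := le_trans h2.le (httmono.le_iff_le.mpr hn)
      rw [hr0 n s this, zero_smul]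
    have hones : ∀ n ∈ Finset.range m, ramp n s • Δ n = Δ n := by
      intro n hn
      rw [Finset.mem_range] at hn
      have : tt (n+1) ≤ s := le_trans (httmono.le_iff_le.mpr hn) h1
      rw [hr1 n s this, one_smul]
    simp only [hu]
    rw [tsum_eq_sum hz, Finset.sum_range_succ, Finset.sum_congr rfl hones]
    simp only [hΔ]
    rw [Finset.sum_range_sub (fun n => vs n)]
    abel
  -- continuity of u
  have hucont : Continuous u := by
    rw [continuous_iff_continuousAt]
    intro s
    obtain ⟨N, hN⟩ : ∃ N : ℕ, s < tt N := (httop.eventually_gt_atTop s).exists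
    have heq : ∀ r ∈ Set.Iio (tt N),
        (fun r => vs 0 + ∑ n ∈ Finset.range N, ramp n r • Δ n) r = u r := by
      intro r hr
      simp only [hu]
      congr 1
      refine (tsum_eq_sum ?_).symm
      intro n hn
      rw [Finset.mem_range, not_lt] at hn
      have : r ≤ tt n := le_trans (le_of_lt hr) (httmono.le_iff_le.mpr hn)
      rw [hr0 n r this, zero_smul]
    have hcl : Continuous (fun r => vs 0 + ∑ n ∈ Finset.range N, ramp n r • Δ n) :=
      continuous_const.add (continuous_finset_sum _ (fun n _ => (hrc n).smul continuous_const))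
    exact hcl.continuousAt.congr (Filter.eventuallyEq_of_mem (Iio_mem_nhds hN) heq)
  -- locating s between knots
  have hiv : ∀ s, tt 0 ≤ s → ∃ m, tt m ≤ s ∧ s < tt (m+1) := by
    intro s hs
    have hex : ∃ n, s < tt n := (httop.eventually_gt_atTop s).exists
    have hlt : s < tt (Nat.find hex) := Nat.find_spec hex
    have hne : Nat.find hex ≠ 0 := by
      intro h
      rw [h] at hlt; exact absurd hlt (not_lt.mpr hs)
    obtain ⟨m, hm⟩ := Nat.exists_eq_succ_of_ne_zero hne
    refine ⟨m, ?_, by rw [hm] at hlt; exact hlt⟩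
    have hlt2 : m < Nat.find hex := by rw [hm]; exact Nat.lt_succ_self m
    exact not_lt.mp (Nat.find_min hex hlt2)
  -- limit of u
  have hulim : Tendsto u atTop (𝓝 v) := by
    rw [Metric.tendsto_atTop]
    intro ε' hε'
    obtain ⟨N, hN⟩ := Metric.tendsto_atTop.mp hvsl (ε'/2) (by linarith)
    refine ⟨tt N, fun s hs => ?_⟩
    obtain ⟨m, hm1, hm2⟩ := hiv s (le_trans (httmono.monotone (Nat.zero_le N)) hs)
    have hmN : N ≤ m := Nat.lt_succ_iff.mp (httmono.lt_iff_lt.mp (lt_of_le_of_lt hs hm2))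
    have h1 : ‖vs m - v‖ < ε'/2 := by rw [← dist_eq_norm]; exact hN m hmN
    have h2 : ‖vs (m+1) - v‖ < ε'/2 := by
      rw [← dist_eq_norm]; exact hN (m+1) (le_trans hmN (Nat.le_succ m))
    have hr := hrmem m s
    rw [hcol m s hm1 hm2, dist_eq_norm]
    have hrw : vs m + ramp m s • Δ m - v
        = (1 - ramp m s) • (vs m - v) + ramp m s • (vs (m+1) - v) := by
      simp only [hΔ]
      module
    rw [hrw]
    calc ‖(1 - ramp m s) • (vs m - v) + ramp m s • (vs (m+1) - v)‖
        ≤ ‖(1 - ramp m s) • (vs m - v)‖ + ‖ramp m s • (vs (m+1) - v)‖ := norm_add_le _ _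
      _ = (1 - ramp m s) * ‖vs m - v‖ + ramp m s * ‖vs (m+1) - v‖ := by
          rw [norm_smul, norm_smul, Real.norm_of_nonneg (by linarith [hr.2]),
            Real.norm_of_nonneg hr.1]
      _ ≤ (1 - ramp m s) * (ε'/2) + ramp m s * (ε'/2) := by
          apply add_le_add
          · exact mul_le_mul_of_nonneg_left h1.le (by linarith [hr.2])
          · exact mul_le_mul_of_nonneg_left h2.le hr.1
      _ = ε'/2 := by ring
      _ < ε' := by linarith
  -- the trajectory s ↦ s • u s
  have hγc : ContinuousOn (fun s : ℝ => s • u s) (Set.Ici (tt 0)) :=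
    (continuous_id.smul hucont).continuousOn
  have hγv : Tendsto (fun s : ℝ => s⁻¹ • (s • u s)) atTop (𝓝 v) := by
    apply hulim.congr'
    filter_upwards [eventually_ge_atTop (1:ℝ)] with s hs
    rw [smul_smul, inv_mul_cancel₀ (by linarith), one_smul]
  have hmain := key_tendsto hf hF (t₀ := tt 0) hγc hγv
  have hcomp : Tendsto (fun n => ((f (tt n,0)).1)⁻¹ • (f (tt n, tt n • u (tt n))).2)
      atTop (𝓝 (F v)) := hmain.comp httop
  have hev : ∀ n, ε/2 ≤ dist (((f (tt n,0)).1)⁻¹ • (f (tt n, tt n • u (tt n))).2) (F v) := by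
    intro n
    have hueq : u (tt n) = vs n := by
      rw [hcol n (tt n) le_rfl (by have := httlt n; linarith),
        hr0 n (tt n) le_rfl, zero_smul, add_zero]
    rw [hueq]
    have hd := hTspec n (tt n) (httT n)
    have hD : ε ≤ dist (F (vs n)) (F v) := hdist n
    have htri := dist_triangle (F (vs n))
      (((f (tt n,0)).1)⁻¹ • (f (tt n, tt n • vs n)).2) (F v)
    rw [dist_comm] at hd
    linarith
  obtain ⟨N, hN⟩ := (Metric.tendsto_atTop.mp hcomp) (ε/2) (by linarith)
  exact absurd (hN N le_rfl) (not_lt.mpr (hev N))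


end AuxLemmas

/-- Let `f` be a causal homeomorphism of `G = ℝ × ℝ³` that is an
asymptotic homeomorphism: `f` is asymptotically regular with asymptotic transform `F = f⁺`
and `f⁻¹` is asymptotically regular with asymptotic transform `F′ = (f⁻¹)⁺`.  Then `f⁺` is
a homeomorphism of `ℝ³` and `(f⁻¹)⁺ = (f⁺)⁻¹`: both `F` and `F′` are continuous and `F′`
is the two-sided inverse of `F`. -/
theorem stmt9 (f : Gal ≃ₜ Gal) (hf : Causal f) (F F' : E3 → E3)
    (hF : IsAsympTransform f F) (hF' : IsAsympTransform f.symm F') :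
    Continuous F ∧ Continuous F' ∧
      Function.LeftInverse F' F ∧ Function.RightInverse F' F := by
  have hfsymm := causal_symm hf
  have hli : Function.LeftInverse F' F := by
    intro v
    have h1 := hF v _ (line_hasAsympVel v)
    have h2 := hF' (F v) _ h1
    have himg : f.symm '' (f '' (semitraj 1 fun t => t • v)) = semitraj 1 (fun t => t • v) := by
      rw [Set.image_image]; simp
    rw [himg] at h2
    exact hasAsympVel_unique h2 (line_hasAsympVel v)
  have hri : Function.RightInverse F' F := by
    intro v
    have h1 := hF' v _ (line_hasAsympVel v)
    have h2 := hF (F' v) _ h1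
    have himg : f '' (f.symm '' (semitraj 1 fun t => t • v)) = semitraj 1 (fun t => t • v) := by
      rw [Set.image_image]; simp
    rw [himg] at h2
    exact hasAsympVel_unique h2 (line_hasAsympVel v)
  exact ⟨continuous_of_causal_transform hf hF,
    continuous_of_causal_transform hfsymm hF', hli, hri⟩
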